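/- Let A be a left noetherian ring, I an indecomposable injective left A-module, and f an endomorphism of I. Then f is either an automorphism or locally nilpotent, i.e. for every x ∈ I there is n ∈ ℕ with fⁿ(x) = 0. -/

import Mathlib

/-- A module is indecomposable if it is nonzero and is not the direct sum of two nonzero
submodules. -/
def Module.Indecomposable (A : Type*) [Ring A] (M : Type*) [AddCommGroup M]
    [Module A M] : Prop :=
  Nontrivial M ∧ ∀ N N' : Submodule A M, IsCompl N N' → N = ⊥ ∨ N' = ⊥

section Aux

variable {A : Type*} [Ring A] {I : Type*} [AddCommGroup I] [Module A I]

/-- Zorn: maximal submodule containing `P` and disjoint from `N`. -/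
lemma exists_maximal_disjoint_submodule (N P : Submodule A I) (hPN : P ⊓ N = ⊥) :
    ∃ C : Submodule A I, (P ≤ C ∧ C ⊓ N = ⊥) ∧
      ∀ D : Submodule A I, P ≤ D → D ⊓ N = ⊥ → C ≤ D → D = C := by
  set s : Set (Submodule A I) := {C | P ≤ C ∧ C ⊓ N = ⊥} with hs
  have hub : ∀ c ⊆ s, IsChain (· ≤ ·) c → ∀ y ∈ c, ∃ ub ∈ s, ∀ z ∈ c, z ≤ ub := by
    intro c hcs hchain y hy
    refine ⟨sSup c, ⟨le_trans (hcs hy).1 (le_sSup hy), ?_⟩, fun z hz => le_sSup hz⟩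
    rw [eq_bot_iff]
    intro z hz
    obtain ⟨hz1, hz2⟩ := Submodule.mem_inf.mp hz
    obtain ⟨D, hDc, hzD⟩ := (Submodule.mem_sSup_of_directed ⟨y, hy⟩ hchain.directedOn).mp hz1
    exact (hcs hDc).2 ▸ Submodule.mem_inf.mpr ⟨hzD, hz2⟩
  obtain ⟨C, -, hmem, hmax⟩ := zorn_le_nonempty₀ s hub P ⟨le_rfl, hPN⟩
  exact ⟨C, hmem, fun D h1 h2 h3 => le_antisymm (hmax ⟨h1, h2⟩ h3) h3⟩

/-- An indecomposable injective module is uniform: two nonzero submodules meet. -/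
lemma uniform_of_indecomposable_injective [Module.Injective A I]
    (hind : Module.Indecomposable A I) {N N' : Submodule A I}
    (hN : N ≠ ⊥) (hN' : N' ≠ ⊥) (hdisj : N ⊓ N' = ⊥) : False := by
  obtain ⟨C, ⟨hN'C, hCN⟩, hCmax⟩ :=
    exists_maximal_disjoint_submodule N N' (by rwa [inf_comm] at hdisj)
  have hNC : N ⊓ C = ⊥ := by
    rw [eq_bot_iff]; intro z hz
    exact hCN ▸ Submodule.mem_inf.mpr ⟨(Submodule.mem_inf.mp hz).2, (Submodule.mem_inf.mp hz).1⟩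
  obtain ⟨M, ⟨hNM, hMC⟩, hMmax⟩ := exists_maximal_disjoint_submodule C N hNC
  set S : Submodule A I := M ⊔ C with hS
  have hMS : M ≤ S := le_sup_left
  have hCS : C ≤ S := le_sup_right
  set Sm : Submodule A ↥S := M.comap S.subtype with hSm
  set Sc : Submodule A ↥S := C.comap S.subtype with hSc
  have hcompl : IsCompl Sm Sc := by
    constructor
    · rw [disjoint_iff, eq_bot_iff]
      intro z hz
      obtain ⟨h1, h2⟩ := Submodule.mem_inf.mp hz
      have hzb : (z : I) ∈ M ⊓ C := Submodule.mem_inf.mpr ⟨h1, h2⟩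
      rw [hMC] at hzb
      exact (Submodule.mem_bot _).mpr (Subtype.ext ((Submodule.mem_bot _).mp hzb))
    · rw [codisjoint_iff, eq_top_iff]
      intro z _
      obtain ⟨m, hm, c, hc, hmc⟩ := Submodule.mem_sup.mp z.2
      exact Submodule.mem_sup.mpr ⟨⟨m, hMS hm⟩, hm, ⟨c, hCS hc⟩, hc, Subtype.ext hmc⟩
  set φ : ↥S →ₗ[A] I :=
    S.subtype.comp (Sm.subtype.comp (Submodule.projectionOnto Sm Sc hcompl)) with hφ
  have hφM : ∀ (z : ↥S), (z : I) ∈ M → φ z = (z : I) := by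
    intro z hz
    have hz' : z = ((⟨z, hz⟩ : Sm) : ↥S) := rfl
    rw [hφ, LinearMap.comp_apply, LinearMap.comp_apply, hz',
      Submodule.projectionOnto_apply_left hcompl (⟨z, hz⟩ : Sm)]
    rfl
  have hφC : ∀ (z : ↥S), (z : I) ∈ C → φ z = 0 := by
    intro z hz
    rw [hφ, LinearMap.comp_apply, LinearMap.comp_apply,
      Submodule.projectionOnto_apply_of_mem_right hcompl (x := z) hz]
    simp
  obtain ⟨h, hh⟩ := Module.Injective.out S.subtype (Submodule.injective_subtype S) φ
  have hhM : ∀ m : I, m ∈ M → h m = m := fun m hm => by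
    have := hh ⟨m, hMS hm⟩
    rwa [hφM ⟨m, hMS hm⟩ hm] at this
  have hhC : ∀ c : I, c ∈ C → h c = 0 := fun c hc => by
    have := hh ⟨c, hCS hc⟩
    rwa [hφC ⟨c, hCS hc⟩ hc] at this
  have hrange : LinearMap.range h = M := by
    have hMle : M ≤ LinearMap.range h := fun m hm => ⟨m, hhM m hm⟩
    have hrc : LinearMap.range h ⊓ C = ⊥ := by
      rw [eq_bot_iff]
      intro y hy
      obtain ⟨⟨x, hx⟩, hyC⟩ := Submodule.mem_inf.mp hy
      rw [Submodule.mem_bot]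
      by_contra hy0
      have hxC : x ∉ C := fun hxc => hy0 (by rw [← hx, hhC x hxc])
      have hDN : ¬((C ⊔ Submodule.span A {x}) ⊓ N = ⊥) := by
        intro hDbot
        have hD := hCmax _ (le_trans hN'C le_sup_left) hDbot le_sup_left
        exact hxC (hD ▸ Submodule.mem_sup_right (Submodule.mem_span_singleton_self x))
      obtain ⟨n, hnD, hnN, hn0⟩ : ∃ n, n ∈ C ⊔ Submodule.span A {x} ∧ n ∈ N ∧ n ≠ 0 := by
        by_contra hcon
        push_neg at hcon
        apply hDN
        rw [eq_bot_iff]; intro z hz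
        obtain ⟨h1, h2⟩ := Submodule.mem_inf.mp hz
        exact (Submodule.mem_bot _).mpr (hcon z h1 h2)
      obtain ⟨c, hc, z, hz, hczn⟩ := Submodule.mem_sup.mp hnD
      obtain ⟨a, haz⟩ := Submodule.mem_span_singleton.mp hz
      have hhn : h n = a • y := by
        rw [← hczn, map_add, hhC c hc, ← haz, map_smul, hx, zero_add]
      have hnM : h n = n := hhM n (hNM hnN)
      have hnC : n ∈ C := by
        rw [← hnM, hhn]; exact Submodule.smul_mem C a hyC
      have : n ∈ C ⊓ N := Submodule.mem_inf.mpr ⟨hnC, hnN⟩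
      rw [hCN, Submodule.mem_bot] at this
      exact hn0 this
    exact hMmax _ (le_trans hNM hMle) hrc hMle
  have hproj : ∀ z : I, h (h z) = h z := fun z =>
    hhM (h z) (hrange ▸ LinearMap.mem_range_self h z)
  have hcompl2 : IsCompl (LinearMap.range h) (LinearMap.ker h) := by
    constructor
    · rw [disjoint_iff, eq_bot_iff]
      intro z hz
      obtain ⟨h1, h2⟩ := Submodule.mem_inf.mp hz
      rw [Submodule.mem_bot]
      have hzM := hhM z (hrange ▸ h1)
      rw [LinearMap.mem_ker] at h2
      rw [← hzM, h2]
    · rw [codisjoint_iff, eq_top_iff]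
      intro z _
      refine Submodule.mem_sup.mpr ⟨h z, LinearMap.mem_range_self h z, z - h z, ?_, by abel⟩
      rw [LinearMap.mem_ker, map_sub, hproj, sub_self]
  rcases hind.2 _ _ hcompl2 with h1 | h2
  · refine hN (eq_bot_iff.mpr fun z hz => ?_)
    have : z ∈ LinearMap.range h := hrange.symm ▸ hNM hz
    exact h1 ▸ this
  · have hCker : C ≤ LinearMap.ker h := fun c hc => LinearMap.mem_ker.mpr (hhC c hc)
    exact hN' (eq_bot_iff.mpr fun z hz => h2 ▸ hCker (hN'C hz))

/-- An injective endomorphism of an indecomposable injective module is surjective. -/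
lemma surjective_of_injective_endo [Module.Injective A I]
    (hind : Module.Indecomposable A I) (f : I →ₗ[A] I) (hf : Function.Injective f) :
    Function.Surjective f := by
  obtain ⟨r, hr⟩ := Module.Injective.out f hf (LinearMap.id : I →ₗ[A] I)
  set e : I →ₗ[A] I := f.comp r with he
  have heP : ∀ z ∈ LinearMap.range f, e z = z := by
    rintro z ⟨w, rfl⟩
    rw [he, LinearMap.comp_apply, hr w]
    rfl
  have hcompl : IsCompl (LinearMap.range f) (LinearMap.ker e) := by
    constructor
    · rw [disjoint_iff, eq_bot_iff]
      intro z hz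
      obtain ⟨h1, h2⟩ := Submodule.mem_inf.mp hz
      rw [LinearMap.mem_ker] at h2
      rw [Submodule.mem_bot, ← heP z h1, h2]
    · rw [codisjoint_iff, eq_top_iff]
      intro z _
      refine Submodule.mem_sup.mpr ⟨e z, ⟨r z, rfl⟩, z - e z, ?_, by abel⟩
      rw [LinearMap.mem_ker, map_sub, heP (e z) ⟨r z, rfl⟩, sub_self]
  rcases hind.2 _ _ hcompl with h1 | h2
  · obtain ⟨x, y, hxy⟩ := hind.1
    exfalso
    apply hxy
    apply hf
    have hx : f x ∈ LinearMap.range f := ⟨x, rfl⟩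
    have hy : f y ∈ LinearMap.range f := ⟨y, rfl⟩
    rw [h1, Submodule.mem_bot] at hx hy
    rw [hx, hy]
  · have : LinearMap.range f = ⊤ := codisjoint_bot.mp (h2 ▸ hcompl.codisjoint)
    exact LinearMap.range_eq_top.mp this

end Aux

/-- Let `A` be a left noetherian ring, `I` an indecomposable injective left `A`-module
and `f` an endomorphism of `I`.  Then `f` is either an automorphism or locally
nilpotent (for every `x ∈ I` there is `n` with `fⁿ x = 0`). -/
theorem endo_of_indecomposable_injective_bijective_or_locally_nilpotent
    {A : Type*} [Ring A] [IsNoetherianRing A] (I : Type*) [AddCommGroup I] [Module A I]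
    [Module.Injective A I] (hind : Module.Indecomposable A I) (f : I →ₗ[A] I) :
    Function.Bijective f ∨ ∀ x : I, ∃ n : ℕ, (f ^ n) x = 0 := by
  by_cases hinj : Function.Injective f
  · exact Or.inl ⟨hinj, surjective_of_injective_endo hind f hinj⟩
  right
  intro x
  by_contra hcon
  push_neg at hcon
  -- the chain of kernels restricted to the noetherian module span {x} stabilizes
  haveI : IsNoetherian A ↥(Submodule.span A ({x} : Set I)) :=
    isNoetherian_span_of_finite A (Set.finite_singleton x)
  set P : Submodule A I := Submodule.span A ({x} : Set I) with hP
  have hker_mono : Monotone fun n : ℕ => LinearMap.ker (f ^ n) := by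
    intro m n hmn
    obtain ⟨k, rfl⟩ := Nat.exists_eq_add_of_le hmn
    intro z hz
    rw [LinearMap.mem_ker] at hz ⊢
    rw [add_comm, pow_add, Module.End.mul_apply, hz, map_zero]
  set chain : ℕ →o Submodule A ↥P :=
    ⟨fun n => (LinearMap.ker (f ^ n)).comap P.subtype,
      fun m n hmn => Submodule.comap_mono (hker_mono hmn)⟩ with hchain
  obtain ⟨n₀, hn₀⟩ := monotone_stabilizes_iff_noetherian.mpr inferInstance chain
  set y : I := (f ^ n₀) x with hy
  have hy0 : y ≠ 0 := hcon n₀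
  -- span {y} ⊓ ker f = ⊥
  have hspan_ker : Submodule.span A ({y} : Set I) ⊓ LinearMap.ker f = ⊥ := by
    rw [eq_bot_iff]
    intro z hz
    obtain ⟨h1, h2⟩ := Submodule.mem_inf.mp hz
    obtain ⟨a, haz⟩ := Submodule.mem_span_singleton.mp h1
    rw [LinearMap.mem_ker] at h2
    have hax : a • x ∈ P := Submodule.smul_mem _ a (Submodule.mem_span_singleton_self x)
    have hfz : (f ^ (n₀ + 1)) (a • x) = 0 := by
      rw [pow_succ', Module.End.mul_apply, map_smul, ← hy, haz, h2]
    have hmem : (⟨a • x, hax⟩ : ↥P) ∈ chain (n₀ + 1) := by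
      exact hfz
    rw [← hn₀ (n₀ + 1) (Nat.le_succ n₀)] at hmem
    have : (f ^ n₀) (a • x) = 0 := by exact hmem
    rw [Submodule.mem_bot, ← haz, ← map_smul, this]
  have hkf : LinearMap.ker f ≠ ⊥ := fun hbot =>
    hinj (LinearMap.ker_eq_bot.mp hbot)
  have hsy : Submodule.span A ({y} : Set I) ≠ ⊥ := fun hbot => by
    have : y ∈ (⊥ : Submodule A I) := hbot ▸ Submodule.mem_span_singleton_self y
    exact hy0 ((Submodule.mem_bot _).mp this)
  exact uniform_of_indecomposable_injective hind hkf hsy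
    (by rwa [inf_comm] at hspan_ker)
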